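/- Assume β > 0, β_year > 0, Cov(Y, ε) = 0, Var(Y) > 0, the Gram determinant Var(ln D)·Var(Y) − Cov(ln D, Y)² is positive, and (b, b_year) satisfies the population normal equations Cov(ln D, ln L) = −b·Var(ln D) − b_year·Cov(ln D, Y) and Cov(Y − Y₀, ln L) = −b·Cov(ln D, Y) − b_year·Var(Y) for ln L generated by the DGP ln L = ln B − β·ln D − β_year·(Y − Y₀) − β·ε. If additionally Var(ln D)·Var(Y) − Cov(ln D, Y)² + Var(Y)·Cov(ln D, ε) > 0 and b ≠ 0, then b_year/b − β_year/β = −(β_year·Var(Y) + β·Cov(ln D, Y))·Cov(ln D, ε) / (β·(Var(ln D)·Var(Y) − Cov(ln D, Y)² + Var(Y)·Cov(ln D, ε))). -/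

import Mathlib

open MeasureTheory ProbabilityTheory

/-- Covariance of two real-valued random variables with respect to a measure `μ`. -/
noncomputable def cov {Ω : Type*} [MeasurableSpace Ω] (μ : Measure Ω) (X Y : Ω → ℝ) : ℝ :=
  ∫ ω, (X ω - ∫ x, X x ∂μ) * (Y ω - ∫ x, Y x ∂μ) ∂μ

lemma memlp_mul_integrable {Ω : Type*} [MeasurableSpace Ω] {μ : Measure Ω}
    {f g : Ω → ℝ} (hf : MemLp f 2 μ) (hg : MemLp g 2 μ) :
    Integrable (fun x => f x * g x) μ := by
  have h : (fun x => f x * g x)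
      = fun x => ((f x + g x) ^ 2 - f x ^ 2 - g x ^ 2) / 2 := by
    funext x; ring
  rw [h]
  exact (((hf.add hg).integrable_sq.sub hf.integrable_sq).sub hg.integrable_sq).div_const 2

lemma centered_memlp {Ω : Type*} [MeasurableSpace Ω] {μ : Measure Ω} [IsProbabilityMeasure μ]
    {f : Ω → ℝ} (hf : MemLp f 2 μ) : MemLp (fun ω => f ω - ∫ x, f x ∂μ) 2 μ :=
  hf.sub (memLp_const _)

lemma variance_eq_cov {Ω : Type*} [MeasurableSpace Ω] {μ : Measure Ω} [IsProbabilityMeasure μ]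
    {f : Ω → ℝ} (hf : MemLp f 2 μ) : variance f μ = cov μ f f := by
  rw [variance_eq_integral hf.aestronglyMeasurable.aemeasurable, cov]
  congr 1
  funext ω
  simp [sq]

lemma cov_comm {Ω : Type*} [MeasurableSpace Ω] (μ : Measure Ω) (f g : Ω → ℝ) :
    cov μ f g = cov μ g f := by
  unfold cov; congr 1; funext ω; ring

/-- Covariance against an affine combination. -/
lemma cov_affine {Ω : Type*} [MeasurableSpace Ω] (μ : Measure Ω) [IsProbabilityMeasure μ]
    (W Z V E : Ω → ℝ) (hW : MemLp W 2 μ) (hZ : MemLp Z 2 μ) (hV : MemLp V 2 μ)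
    (hE : MemLp E 2 μ) (c a d e : ℝ) :
    cov μ W (fun ω => c + a * Z ω + d * V ω + e * E ω)
      = a * cov μ W Z + d * cov μ W V + e * cov μ W E := by
  have hZi := hZ.integrable one_le_two
  have hVi := hV.integrable one_le_two
  have hEi := hE.integrable one_le_two
  have hI2 : Integrable (fun ω => c + a * Z ω) μ :=
    (integrable_const c).add (hZi.const_mul a)
  have hI3 : Integrable (fun ω => c + a * Z ω + d * V ω) μ :=
    hI2.add (hVi.const_mul d)
  have hmean : (∫ ω, (c + a * Z ω + d * V ω + e * E ω) ∂μ)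
      = c + a * (∫ x, Z x ∂μ) + d * (∫ x, V x ∂μ) + e * (∫ x, E x ∂μ) := by
    rw [integral_add hI3 (hEi.const_mul e), integral_add hI2 (hVi.const_mul d),
      integral_add (integrable_const c) (hZi.const_mul a),
      integral_const_mul, integral_const_mul, integral_const_mul, integral_const]
    simp
  unfold cov
  rw [hmean]
  have key : ∀ ω, (W ω - ∫ x, W x ∂μ) *
      ((c + a * Z ω + d * V ω + e * E ω)
        - (c + a * (∫ x, Z x ∂μ) + d * (∫ x, V x ∂μ) + e * (∫ x, E x ∂μ)))
      = a * ((W ω - ∫ x, W x ∂μ) * (Z ω - ∫ x, Z x ∂μ))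
        + d * ((W ω - ∫ x, W x ∂μ) * (V ω - ∫ x, V x ∂μ))
        + e * ((W ω - ∫ x, W x ∂μ) * (E ω - ∫ x, E x ∂μ)) := by
    intro ω; ring
  simp_rw [key]
  have iWZ := memlp_mul_integrable (centered_memlp hW) (centered_memlp hZ)
  have iWV := memlp_mul_integrable (centered_memlp hW) (centered_memlp hV)
  have iWE := memlp_mul_integrable (centered_memlp hW) (centered_memlp hE)
  have hJ : Integrable (fun ω => a * ((W ω - ∫ x, W x ∂μ) * (Z ω - ∫ x, Z x ∂μ))
      + d * ((W ω - ∫ x, W x ∂μ) * (V ω - ∫ x, V x ∂μ))) μ :=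
    (iWZ.const_mul a).add (iWV.const_mul d)
  rw [integral_add hJ (iWE.const_mul e),
    integral_add (iWZ.const_mul a) (iWV.const_mul d),
    integral_const_mul, integral_const_mul, integral_const_mul]

/-- Explicit formula for the bias of the estimated rate of algorithmic progress. -/
theorem bias_explicit_formula {Ω : Type*} [MeasurableSpace Ω] (μ : Measure Ω) [IsProbabilityMeasure μ]
    (X Y ε : Ω → ℝ) (hX : MemLp X 2 μ) (hY : MemLp Y 2 μ) (hε : MemLp ε 2 μ)
    (β β_year lnB Y₀ : ℝ) (lnL : Ω → ℝ)
    (hlnL : ∀ ω, lnL ω = lnB - β * X ω - β_year * (Y ω - Y₀) - β * ε ω)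
    (hβ : 0 < β) (hβyear : 0 < β_year) (hYε : cov μ Y ε = 0)
    (hVarY : 0 < variance Y μ)
    (hGram : 0 < variance X μ * variance Y μ - (cov μ X Y) ^ 2)
    (b b_year : ℝ)
    (h1 : cov μ X lnL = -b * variance X μ - b_year * cov μ X Y)
    (h2 : cov μ (fun ω => Y ω - Y₀) lnL = -b * cov μ X Y - b_year * variance Y μ)
    (hden : 0 < variance X μ * variance Y μ - (cov μ X Y) ^ 2 + variance Y μ * cov μ X ε)
    (hb : b ≠ 0) :
    b_year / b - β_year / β =
      -((β_year * variance Y μ + β * cov μ X Y) * cov μ X ε) /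
        (β * (variance X μ * variance Y μ - (cov μ X Y) ^ 2 + variance Y μ * cov μ X ε)) := by
  have hlnL' : lnL = fun ω => (lnB + β_year * Y₀) + (-β) * X ω + (-β_year) * Y ω + (-β) * ε ω := by
    funext ω; rw [hlnL ω]; ring
  set A := variance X μ
  set D := variance Y μ
  set C := cov μ X Y
  set e := cov μ X ε
  -- expand h1
  have e1 : cov μ X lnL = (-β) * A + (-β_year) * C + (-β) * e := by
    rw [hlnL', cov_affine μ X X Y ε hX hX hY hε, ← variance_eq_cov hX]
  -- expand h2 ; first: cov of shifted Y equals cov of Y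
  have hshift : ∀ Z : Ω → ℝ, MemLp Z 2 μ → cov μ (fun ω => Y ω - Y₀) Z = cov μ Y Z := by
    intro Z hZmem
    unfold cov
    have : (∫ ω, (Y ω - Y₀) ∂μ) = (∫ x, Y x ∂μ) - Y₀ := by
      rw [integral_sub (hY.integrable one_le_two) (integrable_const _), integral_const]
      simp
    rw [this]
    congr 1; funext ω; ring
  have e2 : cov μ (fun ω => Y ω - Y₀) lnL = (-β) * C + (-β_year) * D := by
    have hlnLmem : MemLp lnL 2 μ := by
      rw [hlnL']
      exact (((memLp_const (lnB + β_year * Y₀)).add (hX.const_mul (-β))).add (hY.const_mul (-β_year))).add (hε.const_mul (-β))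
    rw [hshift lnL hlnLmem, hlnL', cov_affine μ Y X Y ε hY hX hY hε,
      ← variance_eq_cov hY, cov_comm μ Y X, hYε]
    ring
  rw [e1] at h1
  rw [e2] at h2
  -- from h2 : (b - β) * C + (b_year - β_year) * D = 0
  -- from h1 : (b - β) * A + (b_year - β_year) * C = β * e
  have hD : D ≠ 0 := ne_of_gt hVarY
  have hG : A * D - C ^ 2 ≠ 0 := ne_of_gt hGram
  have hb1 : (b - β) * (A * D - C ^ 2) = β * e * D := by linear_combination D * h1 - C * h2
  have hb2 : (b_year - β_year) * (A * D - C ^ 2) = -(β * e * C) := by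
    linear_combination A * h2 - C * h1
  have hbval : b = β * (A * D - C ^ 2 + e * D) / (A * D - C ^ 2) := by
    field_simp
    linear_combination hb1
  have hbyval : b_year = β_year - β * e * C / (A * D - C ^ 2) := by
    field_simp
    linear_combination hb2
  rw [hbval, hbyval]
  have hden' : A * D - C ^ 2 + D * e ≠ 0 := ne_of_gt hden
  have hβ' : β ≠ 0 := ne_of_gt hβ
  have hnum : A * D - C ^ 2 + e * D ≠ 0 := by
    intro h; apply hden'; linarith
  field_simp
  ring
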